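/- Let μ₁,...,μ_k be probability measures and f₁,...,f_k square-integrable, where f_i : X_i × X_{i+1} → ℝ (indices mod k). Then ∫ f₁(x₁,x₂)f₂(x₂,x₃)···f_k(x_k,x₁) dx₁···dx_k ≤ sqrt( ∏_{i=1}^k ∫∫ f_i² dx_i dx_{i+1} ). -/

import Mathlib

open MeasureTheory Function Finset
open scoped ENNReal NNReal
open Fin.NatCast

private lemma prod_range_split {M : Type*} [CommMonoid M] {k : ℕ} (hk : 3 ≤ k) (f : ℕ → M) :
    ∏ i ∈ Finset.range k, f i
      = f 0 * (∏ i ∈ Finset.Ico 1 (k-1), f i) * f (k-1) := by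
  obtain ⟨n, rfl⟩ : ∃ n, k = n + 3 := ⟨k - 3, by omega⟩
  rw [show n + 3 - 1 = n + 2 from rfl, Finset.prod_range_succ,
    Finset.range_eq_Ico, Finset.prod_eq_prod_Ico_succ_bot (by omega)]

private lemma prod_range_split_top {M : Type*} [CommMonoid M] {k : ℕ} (hk : 3 ≤ k) (f : ℕ → M) :
    ∏ i ∈ Finset.range k, f i = (∏ i ∈ Finset.range (k-2), f i) * f (k-2) * f (k-1) := by
  obtain ⟨n, rfl⟩ : ∃ n, k = n + 3 := ⟨k - 3, by omega⟩
  rw [show n+3-1 = n+2 from rfl, show n+3-2 = n+1 from rfl, Finset.prod_range_succ,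
     Finset.prod_range_succ]

private lemma update_cast {k : ℕ} (X : Fin k → Type*) (x : ∀ i, X i) {i j : Fin k}
    (h : i = j) (t : X i) : Function.update x i t j = _root_.cast (congrArg X h) t := by
  subst h; simp

private lemma lintegral_cast {k : ℕ} (X : Fin k → Type*) [∀ i, MeasurableSpace (X i)]
    (μ : ∀ i, Measure (X i)) {i j : Fin k} (h : i = j) (Φ : X j → ℝ≥0∞) :
    ∫⁻ t, Φ (_root_.cast (congrArg X h) t) ∂μ i = ∫⁻ s, Φ s ∂μ j := by subst h; simp

private lemma measurable_cast_fin {k : ℕ} (X : Fin k → Type*) [∀ i, MeasurableSpace (X i)]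
    {i j : Fin k} (h : i = j) :
    Measurable fun t : X i => _root_.cast (congrArg X h) t := by
  subst h; exact measurable_id

private lemma cycle_lintegral_le
    (k : ℕ) [NeZero k] (hk : 3 ≤ k)
    (X : Fin k → Type*) [∀ i, MeasurableSpace (X i)]
    (μ : ∀ i, Measure (X i)) [∀ i, IsProbabilityMeasure (μ i)]
    (G : ∀ i : Fin k, X i × X (i + 1) → ℝ≥0∞) (hG : ∀ i, Measurable (G i)) :
    ∫⁻ x, ∏ i, G i (x i, x (i + 1)) ∂Measure.pi μ ≤
      ∏ i, (∫⁻ q, G i q ^ (2 : ℝ) ∂((μ i).prod (μ (i + 1)))) ^ (1/2 : ℝ) := by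
  classical
  have h22 : (2:ℝ).HolderConjugate 2 := (Real.holderConjugate_iff_eq_conjExponent one_lt_two).2 (by norm_num)
  have hcast : ∀ j : ℕ, ((j : Fin k) + 1) = ((j + 1 : ℕ) : Fin k) := by
    intro j; push_cast; ring
  have hne : ∀ {a b : ℕ}, a < k → b < k → a ≠ b → (a : Fin k) ≠ (b : Fin k) := by
    intro a b ha hb hab h
    apply hab
    have := congrArg Fin.val h
    rwa [Fin.val_cast_of_lt ha, Fin.val_cast_of_lt hb] at this
  set F : (∀ i, X i) → ℝ≥0∞ := fun x => ∏ i, G i (x i, x (i + 1)) with hF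
  have hFmeas : Measurable F :=
    Finset.measurable_prod _ fun i _ =>
      (hG i).comp ((measurable_pi_apply i).prodMk (measurable_pi_apply (i + 1)))
  set N : Fin k → ℝ≥0∞ :=
    fun a => (∫⁻ q, G a q ^ (2:ℝ) ∂((μ a).prod (μ (a + 1)))) ^ (1/2 : ℝ) with hN
  set S : ℕ → Finset (Fin k) := fun j => Finset.univ.filter (fun i : Fin k => (i : ℕ) < j)
    with hS
  have h0 : ((0:ℕ) : Fin k) = ((k-1 : ℕ) : Fin k) + 1 := by
    rw [hcast (k-1), show k-1+1 = k from by omega, Fin.natCast_self, Nat.cast_zero]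
  have hsplit : ∀ y : ∀ i, X i,
      F y = G ((0:ℕ) : Fin k) (y ((0:ℕ) : Fin k), y (((0:ℕ) : Fin k) + 1)) *
        (∏ i ∈ Finset.Ico 1 (k-1), G (i : Fin k) (y (i : Fin k), y ((i : Fin k) + 1))) *
        G ((k-1 : ℕ) : Fin k) (y ((k-1 : ℕ) : Fin k), y (((k-1 : ℕ) : Fin k) + 1)) := by
    intro y
    have h1 : F y
        = ∏ i ∈ Finset.range k, G (i : Fin k) (y (i : Fin k), y ((i : Fin k) + 1)) := by
      rw [← Fin.prod_univ_eq_prod_range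
        (fun j : ℕ => G (j : Fin k) (y (j : Fin k), y ((j : Fin k) + 1))) k, hF]
      exact Finset.prod_congr rfl fun i _ => by rw [Fin.cast_val_eq_self]
    rw [h1, prod_range_split hk]
  -- main induction
  have claim : ∀ m : ℕ, m ≤ k - 2 → ∀ x : ∀ i, X i,
      (∫⋯∫⁻_(S (m+1)), F ∂μ) x ≤
        (∏ i ∈ Finset.range m, N (i : Fin k)) *
          ((∫⁻ t, G (m : Fin k) (t, x ((m : Fin k) + 1)) ^ (2:ℝ) ∂μ (m : Fin k)) ^ (1/2 : ℝ) *
            ((∏ i ∈ Finset.Ico (m+1) (k-1),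
                G (i : Fin k) (x (i : Fin k), x ((i : Fin k) + 1))) *
              (∫⁻ s, G ((k-1:ℕ) : Fin k) (x ((k-1:ℕ) : Fin k), s) ^ (2:ℝ)
                  ∂μ (((k-1:ℕ) : Fin k) + 1)) ^ (1/2 : ℝ))) := by
    intro m
    induction m with
    | zero =>
      intro _ x
      simp only [zero_add, Finset.range_zero, Finset.prod_empty, one_mul]
      have hS1 : S 1 = {((k-1 : ℕ) : Fin k) + 1} := by
        ext i
        simp only [hS, Finset.mem_filter, Finset.mem_univ, true_and, Finset.mem_singleton]
        rw [← h0, Fin.ext_iff, Fin.val_cast_of_lt (by omega : 0 < k)]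
        omega
      rw [hS1, lmarginal_singleton, h0]
      have hneC : ((k-1:ℕ) : Fin k) ≠ ((k-1:ℕ) : Fin k) + 1 := by
        rw [← h0]; exact hne (by omega) (by omega) (by omega)
      have hneD : (((k-1:ℕ) : Fin k) + 1) + 1 ≠ ((k-1:ℕ) : Fin k) + 1 := by
        rw [← h0, hcast 0]; exact hne (by omega) (by omega) (by omega)
      have hbody : ∀ t, F (Function.update x (((k-1:ℕ) : Fin k) + 1) t)
          = (∏ i ∈ Finset.Ico 1 (k-1), G (i : Fin k) (x (i : Fin k), x ((i : Fin k) + 1))) *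
            (G (((k-1:ℕ) : Fin k) + 1) (t, x ((((k-1:ℕ) : Fin k) + 1) + 1)) *
              G ((k-1:ℕ) : Fin k) (x ((k-1:ℕ) : Fin k), t)) := by
        intro t
        have hmidt : (∏ i ∈ Finset.Ico 1 (k-1), G (i : Fin k)
              (Function.update x (((k-1:ℕ) : Fin k) + 1) t (i : Fin k),
               Function.update x (((k-1:ℕ) : Fin k) + 1) t ((i : Fin k) + 1)))
            = ∏ i ∈ Finset.Ico 1 (k-1), G (i : Fin k) (x (i : Fin k), x ((i : Fin k) + 1)) := by
          refine Finset.prod_congr rfl fun i hi => ?_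
          obtain ⟨hi1, hi2⟩ := Finset.mem_Ico.1 hi
          have hA : (i : Fin k) ≠ ((k-1:ℕ) : Fin k) + 1 := by
            rw [← h0]; exact hne (by omega) (by omega) (by omega)
          have hB : ((i : Fin k) + 1) ≠ ((k-1:ℕ) : Fin k) + 1 := by
            rw [hcast i, ← h0]; exact hne (by omega) (by omega) (by omega)
          rw [Function.update_of_ne hA, Function.update_of_ne hB]
        rw [hsplit, h0, Function.update_self, Function.update_of_ne hneD,
          Function.update_of_ne hneC, hmidt]
        ring
      have hmeas2 : Measurable fun t => G (((k-1:ℕ) : Fin k) + 1)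
            (t, x ((((k-1:ℕ) : Fin k) + 1) + 1)) *
          G ((k-1:ℕ) : Fin k) (x ((k-1:ℕ) : Fin k), t) :=
        ((hG _).comp (measurable_id.prodMk measurable_const)).mul
          ((hG _).comp (measurable_const.prodMk measurable_id))
      have hCS := ENNReal.lintegral_mul_le_Lp_mul_Lq (μ (((k-1:ℕ) : Fin k) + 1)) h22
        (((hG _).comp (measurable_id.prodMk measurable_const)).aemeasurable :
          AEMeasurable (fun t => G (((k-1:ℕ) : Fin k) + 1)
            (t, x ((((k-1:ℕ) : Fin k) + 1) + 1))) _)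
        (((hG _).comp (measurable_const.prodMk measurable_id)).aemeasurable :
          AEMeasurable (fun t => G ((k-1:ℕ) : Fin k) (x ((k-1:ℕ) : Fin k), t)) _)
      simp only [Pi.mul_apply] at hCS
      calc (∫⁻ t, F (Function.update x (((k-1:ℕ) : Fin k) + 1) t)
              ∂μ (((k-1:ℕ) : Fin k) + 1))
          = (∏ i ∈ Finset.Ico 1 (k-1), G (i : Fin k) (x (i : Fin k), x ((i : Fin k) + 1))) *
              ∫⁻ t, G (((k-1:ℕ) : Fin k) + 1) (t, x ((((k-1:ℕ) : Fin k) + 1) + 1)) *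
                G ((k-1:ℕ) : Fin k) (x ((k-1:ℕ) : Fin k), t) ∂μ (((k-1:ℕ) : Fin k) + 1) := by
            simp only [hbody]
            exact lintegral_const_mul _ hmeas2
        _ ≤ (∏ i ∈ Finset.Ico 1 (k-1), G (i : Fin k) (x (i : Fin k), x ((i : Fin k) + 1))) *
              ((∫⁻ t, G (((k-1:ℕ) : Fin k) + 1)
                  (t, x ((((k-1:ℕ) : Fin k) + 1) + 1)) ^ (2:ℝ)
                  ∂μ (((k-1:ℕ) : Fin k) + 1)) ^ (1/2 : ℝ) *
               (∫⁻ t, G ((k-1:ℕ) : Fin k) (x ((k-1:ℕ) : Fin k), t) ^ (2:ℝ)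
                  ∂μ (((k-1:ℕ) : Fin k) + 1)) ^ (1/2 : ℝ)) := mul_le_mul_right hCS _
        _ = _ := by ring
    | succ m ih =>
      intro hm1 x
      have hm : m ≤ k - 2 := by omega
      have hmk1 : m + 1 < k := by omega
      have hSins : S (m+1+1) = insert ((m : Fin k) + 1) (S (m+1)) := by
        ext i
        simp only [hS, Finset.mem_filter, Finset.mem_univ, true_and, Finset.mem_insert]
        rw [hcast m, Fin.ext_iff, Fin.val_cast_of_lt hmk1]
        omega
      have hnot : ((m : Fin k) + 1) ∉ S (m+1) := by
        simp only [hS, Finset.mem_filter, Finset.mem_univ, true_and]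
        rw [hcast m, Fin.val_cast_of_lt hmk1]
        omega
      rw [hSins, lmarginal_insert _ hFmeas hnot, ← hcast m]
      refine le_trans
        (lintegral_mono fun t => ih hm (Function.update x ((m : Fin k) + 1) t)) ?_
      have hne1 : (((m : Fin k) + 1) + 1) ≠ (m : Fin k) + 1 := by
        rw [hcast m, hcast (m+1)]; exact hne (by omega) (by omega) (by omega)
      have hneK : ((k-1:ℕ) : Fin k) ≠ (m : Fin k) + 1 := by
        rw [hcast m]; exact hne (by omega) (by omega) (by omega)
      have hbody : ∀ t, (∏ i ∈ Finset.range m, N (i : Fin k)) *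
            ((∫⁻ a, G (m : Fin k)
                (a, Function.update x ((m : Fin k) + 1) t ((m : Fin k) + 1)) ^ (2:ℝ)
                ∂μ (m : Fin k)) ^ (1/2 : ℝ) *
              ((∏ i ∈ Finset.Ico (m+1) (k-1), G (i : Fin k)
                  (Function.update x ((m : Fin k) + 1) t (i : Fin k),
                   Function.update x ((m : Fin k) + 1) t ((i : Fin k) + 1))) *
                (∫⁻ s, G ((k-1:ℕ) : Fin k)
                    (Function.update x ((m : Fin k) + 1) t ((k-1:ℕ) : Fin k), s) ^ (2:ℝ)
                    ∂μ (((k-1:ℕ) : Fin k) + 1)) ^ (1/2 : ℝ)))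
          = ((∏ i ∈ Finset.range m, N (i : Fin k)) *
              ((∏ i ∈ Finset.Ico (m+1+1) (k-1), G (i : Fin k)
                  (x (i : Fin k), x ((i : Fin k) + 1))) *
                (∫⁻ s, G ((k-1:ℕ) : Fin k) (x ((k-1:ℕ) : Fin k), s) ^ (2:ℝ)
                    ∂μ (((k-1:ℕ) : Fin k) + 1)) ^ (1/2 : ℝ))) *
            ((∫⁻ a, G (m : Fin k) (a, t) ^ (2:ℝ) ∂μ (m : Fin k)) ^ (1/2 : ℝ) *
              G ((m : Fin k) + 1) (t, x (((m : Fin k) + 1) + 1))) := by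
        intro t
        have hmidt : (∏ i ∈ Finset.Ico (m+1) (k-1), G (i : Fin k)
              (Function.update x ((m : Fin k) + 1) t (i : Fin k),
               Function.update x ((m : Fin k) + 1) t ((i : Fin k) + 1)))
            = G ((m : Fin k) + 1) (t, x (((m : Fin k) + 1) + 1)) *
              ∏ i ∈ Finset.Ico (m+1+1) (k-1), G (i : Fin k)
                (x (i : Fin k), x ((i : Fin k) + 1)) := by
          rw [Finset.prod_eq_prod_Ico_succ_bot (by omega : m+1 < k-1)]
          rw [← hcast m, Function.update_self, Function.update_of_ne hne1]
          congr 1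
          refine Finset.prod_congr rfl fun i hi => ?_
          obtain ⟨hi1, hi2⟩ := Finset.mem_Ico.1 hi
          have hA : (i : Fin k) ≠ (m : Fin k) + 1 := by
            rw [hcast m]; exact hne (by omega) (by omega) (by omega)
          have hB : ((i : Fin k) + 1) ≠ (m : Fin k) + 1 := by
            rw [hcast i, hcast m]; exact hne (by omega) (by omega) (by omega)
          rw [Function.update_of_ne hA, Function.update_of_ne hB]
        rw [hmidt, Function.update_self, Function.update_of_ne hneK]
        ring
      have hWmeas : Measurable fun t : X ((m : Fin k) + 1) =>
          (∫⁻ a, G (m : Fin k) (a, t) ^ (2:ℝ) ∂μ (m : Fin k)) ^ (1/2 : ℝ) :=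
        (((hG _).pow_const _).lintegral_prod_left').pow_const _
      have hGmeas : Measurable fun t : X ((m : Fin k) + 1) =>
          G ((m : Fin k) + 1) (t, x (((m : Fin k) + 1) + 1)) :=
        (hG _).comp (measurable_id.prodMk measurable_const)
      have hCS := ENNReal.lintegral_mul_le_Lp_mul_Lq (μ ((m : Fin k) + 1)) h22
        hWmeas.aemeasurable hGmeas.aemeasurable
      simp only [Pi.mul_apply] at hCS
      have hWsq : (∫⁻ t, ((∫⁻ a, G (m : Fin k) (a, t) ^ (2:ℝ) ∂μ (m : Fin k)) ^ (1/2 : ℝ))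
              ^ (2:ℝ) ∂μ ((m : Fin k) + 1))
          = ∫⁻ q, G (m : Fin k) q ^ (2:ℝ) ∂((μ (m : Fin k)).prod (μ ((m : Fin k) + 1))) := by
        rw [lintegral_congr fun t => by
          rw [← ENNReal.rpow_mul, show (1/2:ℝ)*2 = 1 by norm_num, ENNReal.rpow_one]]
        exact (lintegral_prod_symm _ ((hG _).pow_const _).aemeasurable).symm
      calc ∫⁻ t, (∏ i ∈ Finset.range m, N (i : Fin k)) *
            ((∫⁻ a, G (m : Fin k)
                (a, Function.update x ((m : Fin k) + 1) t ((m : Fin k) + 1)) ^ (2:ℝ)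
                ∂μ (m : Fin k)) ^ (1/2 : ℝ) *
              ((∏ i ∈ Finset.Ico (m+1) (k-1), G (i : Fin k)
                  (Function.update x ((m : Fin k) + 1) t (i : Fin k),
                   Function.update x ((m : Fin k) + 1) t ((i : Fin k) + 1))) *
                (∫⁻ s, G ((k-1:ℕ) : Fin k)
                    (Function.update x ((m : Fin k) + 1) t ((k-1:ℕ) : Fin k), s) ^ (2:ℝ)
                    ∂μ (((k-1:ℕ) : Fin k) + 1)) ^ (1/2 : ℝ))) ∂μ ((m : Fin k) + 1)
          = ((∏ i ∈ Finset.range m, N (i : Fin k)) *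
              ((∏ i ∈ Finset.Ico (m+1+1) (k-1), G (i : Fin k)
                  (x (i : Fin k), x ((i : Fin k) + 1))) *
                (∫⁻ s, G ((k-1:ℕ) : Fin k) (x ((k-1:ℕ) : Fin k), s) ^ (2:ℝ)
                    ∂μ (((k-1:ℕ) : Fin k) + 1)) ^ (1/2 : ℝ))) *
            ∫⁻ t, (∫⁻ a, G (m : Fin k) (a, t) ^ (2:ℝ) ∂μ (m : Fin k)) ^ (1/2 : ℝ) *
              G ((m : Fin k) + 1) (t, x (((m : Fin k) + 1) + 1)) ∂μ ((m : Fin k) + 1) := by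
            simp only [hbody]
            exact lintegral_const_mul _ (hWmeas.mul hGmeas)
        _ ≤ ((∏ i ∈ Finset.range m, N (i : Fin k)) *
              ((∏ i ∈ Finset.Ico (m+1+1) (k-1), G (i : Fin k)
                  (x (i : Fin k), x ((i : Fin k) + 1))) *
                (∫⁻ s, G ((k-1:ℕ) : Fin k) (x ((k-1:ℕ) : Fin k), s) ^ (2:ℝ)
                    ∂μ (((k-1:ℕ) : Fin k) + 1)) ^ (1/2 : ℝ))) *
            ((∫⁻ t, ((∫⁻ a, G (m : Fin k) (a, t) ^ (2:ℝ) ∂μ (m : Fin k)) ^ (1/2 : ℝ)) ^ (2:ℝ)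
                ∂μ ((m : Fin k) + 1)) ^ (1/2 : ℝ) *
              (∫⁻ t, G ((m : Fin k) + 1) (t, x (((m : Fin k) + 1) + 1)) ^ (2:ℝ)
                ∂μ ((m : Fin k) + 1)) ^ (1/2 : ℝ)) := mul_le_mul_right hCS _
        _ = _ := by
            rw [hWsq, show ((∫⁻ q, G (m : Fin k) q ^ (2:ℝ)
                ∂((μ (m : Fin k)).prod (μ ((m : Fin k) + 1)))) ^ (1/2 : ℝ))
              = N (m : Fin k) from rfl, Finset.prod_range_succ]
            ring
  -- final assembly
  obtain ⟨x₀⟩ : Nonempty (∀ i, X i) :=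
    ⟨fun i => (Measure.nonempty_of_neZero (μ i)).some⟩
  have hceq : ((k-2:ℕ) : Fin k) + 1 = ((k-1:ℕ) : Fin k) := by
    rw [hcast (k-2)]; exact congrArg _ (by omega)
  have huniv : (Finset.univ : Finset (Fin k)) = insert (((k-2:ℕ) : Fin k) + 1) (S (k-2+1)) := by
    ext i
    simp only [Finset.mem_univ, true_iff, Finset.mem_insert, hS, Finset.mem_filter, true_and]
    rw [hceq, Fin.ext_iff, Fin.val_cast_of_lt (by omega)]
    have := i.isLt
    omega
  have hnot2 : (((k-2:ℕ) : Fin k) + 1) ∉ S (k-2+1) := by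
    simp only [hS, Finset.mem_filter, Finset.mem_univ, true_and]
    rw [hceq, Fin.val_cast_of_lt (by omega)]
    omega
  have hL : (∫⁻ x, ∏ i, G i (x i, x (i + 1)) ∂Measure.pi μ)
      = ∫⁻ t, (∫⋯∫⁻_(S (k-2+1)), F ∂μ)
          (Function.update x₀ (((k-2:ℕ) : Fin k) + 1) t) ∂μ (((k-2:ℕ) : Fin k) + 1) := by
    rw [show (∫⁻ x, ∏ i, G i (x i, x (i + 1)) ∂Measure.pi μ)
        = (∫⋯∫⁻_(Finset.univ), F ∂μ) x₀ from lintegral_eq_lmarginal_univ x₀, huniv]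
    exact lmarginal_insert _ hFmeas hnot2 x₀
  rw [hL]
  refine le_trans
    (lintegral_mono fun t => claim (k-2) le_rfl
      (Function.update x₀ (((k-2:ℕ) : Fin k) + 1) t)) ?_
  have hIco : Finset.Ico (k-2+1) (k-1) = ∅ := by
    rw [show k-2+1 = k-1 from by omega, Finset.Ico_self]
  have hbody2 : ∀ t, (∏ i ∈ Finset.range (k-2), N (i : Fin k)) *
        ((∫⁻ a, G ((k-2:ℕ) : Fin k)
            (a, Function.update x₀ (((k-2:ℕ) : Fin k) + 1) t (((k-2:ℕ) : Fin k) + 1)) ^ (2:ℝ)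
            ∂μ ((k-2:ℕ) : Fin k)) ^ (1/2 : ℝ) *
          ((∏ i ∈ Finset.Ico (k-2+1) (k-1), G (i : Fin k)
              (Function.update x₀ (((k-2:ℕ) : Fin k) + 1) t (i : Fin k),
               Function.update x₀ (((k-2:ℕ) : Fin k) + 1) t ((i : Fin k) + 1))) *
            (∫⁻ s, G ((k-1:ℕ) : Fin k)
                (Function.update x₀ (((k-2:ℕ) : Fin k) + 1) t ((k-1:ℕ) : Fin k), s) ^ (2:ℝ)
                ∂μ (((k-1:ℕ) : Fin k) + 1)) ^ (1/2 : ℝ)))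
      = (∏ i ∈ Finset.range (k-2), N (i : Fin k)) *
          ((∫⁻ a, G ((k-2:ℕ) : Fin k) (a, t) ^ (2:ℝ) ∂μ ((k-2:ℕ) : Fin k)) ^ (1/2 : ℝ) *
            (∫⁻ s, G ((k-1:ℕ) : Fin k)
                (_root_.cast (congrArg X hceq) t, s) ^ (2:ℝ)
                ∂μ (((k-1:ℕ) : Fin k) + 1)) ^ (1/2 : ℝ)) := by
    intro t
    rw [Function.update_self, update_cast X x₀ hceq, hIco]
    simp only [Finset.prod_empty, one_mul]
  have hWt : Measurable fun t : X (((k-2:ℕ) : Fin k) + 1) =>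
      (∫⁻ a, G ((k-2:ℕ) : Fin k) (a, t) ^ (2:ℝ) ∂μ ((k-2:ℕ) : Fin k)) ^ (1/2 : ℝ) :=
    (((hG _).pow_const _).lintegral_prod_left').pow_const _
  have hPsi : Measurable fun c : X ((k-1:ℕ) : Fin k) =>
      (∫⁻ s, G ((k-1:ℕ) : Fin k) (c, s) ^ (2:ℝ) ∂μ (((k-1:ℕ) : Fin k) + 1)) ^ (1/2 : ℝ) :=
    (((hG _).pow_const _).lintegral_prod_right').pow_const _
  have hPsiC : Measurable fun t : X (((k-2:ℕ) : Fin k) + 1) =>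
      (∫⁻ s, G ((k-1:ℕ) : Fin k)
          (_root_.cast (congrArg X hceq) t, s) ^ (2:ℝ)
          ∂μ (((k-1:ℕ) : Fin k) + 1)) ^ (1/2 : ℝ) :=
    hPsi.comp (measurable_cast_fin X hceq)
  have hCS := ENNReal.lintegral_mul_le_Lp_mul_Lq (μ (((k-2:ℕ) : Fin k) + 1)) h22
    hWt.aemeasurable hPsiC.aemeasurable
  simp only [Pi.mul_apply] at hCS
  have hWsq : (∫⁻ t, ((∫⁻ a, G ((k-2:ℕ) : Fin k) (a, t) ^ (2:ℝ)
          ∂μ ((k-2:ℕ) : Fin k)) ^ (1/2 : ℝ)) ^ (2:ℝ) ∂μ (((k-2:ℕ) : Fin k) + 1))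
      = ∫⁻ q, G ((k-2:ℕ) : Fin k) q ^ (2:ℝ)
          ∂((μ ((k-2:ℕ) : Fin k)).prod (μ (((k-2:ℕ) : Fin k) + 1))) := by
    rw [lintegral_congr fun t => by
      rw [← ENNReal.rpow_mul, show (1/2:ℝ)*2 = 1 by norm_num, ENNReal.rpow_one]]
    exact (lintegral_prod_symm _ ((hG _).pow_const _).aemeasurable).symm
  have hVsq : (∫⁻ t, ((∫⁻ s, G ((k-1:ℕ) : Fin k)
          (_root_.cast (congrArg X hceq) t, s) ^ (2:ℝ)
          ∂μ (((k-1:ℕ) : Fin k) + 1)) ^ (1/2 : ℝ)) ^ (2:ℝ) ∂μ (((k-2:ℕ) : Fin k) + 1))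
      = ∫⁻ q, G ((k-1:ℕ) : Fin k) q ^ (2:ℝ)
          ∂((μ ((k-1:ℕ) : Fin k)).prod (μ (((k-1:ℕ) : Fin k) + 1))) := by
    rw [lintegral_congr fun t => by
      rw [← ENNReal.rpow_mul, show (1/2:ℝ)*2 = 1 by norm_num, ENNReal.rpow_one]]
    rw [lintegral_cast X μ hceq
      (fun c => ∫⁻ s, G ((k-1:ℕ) : Fin k) (c, s) ^ (2:ℝ) ∂μ (((k-1:ℕ) : Fin k) + 1))]
    exact (lintegral_prod _ ((hG _).pow_const _).aemeasurable).symm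
  have hprodk : (∏ i, N i) = ∏ i ∈ Finset.range k, N (i : Fin k) := by
    rw [← Fin.prod_univ_eq_prod_range (fun j : ℕ => N (j : Fin k)) k]
    exact Finset.prod_congr rfl fun i _ => by rw [Fin.cast_val_eq_self]
  calc (∫⁻ t, (∏ i ∈ Finset.range (k-2), N (i : Fin k)) *
        ((∫⁻ a, G ((k-2:ℕ) : Fin k)
            (a, Function.update x₀ (((k-2:ℕ) : Fin k) + 1) t (((k-2:ℕ) : Fin k) + 1)) ^ (2:ℝ)
            ∂μ ((k-2:ℕ) : Fin k)) ^ (1/2 : ℝ) *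
          ((∏ i ∈ Finset.Ico (k-2+1) (k-1), G (i : Fin k)
              (Function.update x₀ (((k-2:ℕ) : Fin k) + 1) t (i : Fin k),
               Function.update x₀ (((k-2:ℕ) : Fin k) + 1) t ((i : Fin k) + 1))) *
            (∫⁻ s, G ((k-1:ℕ) : Fin k)
                (Function.update x₀ (((k-2:ℕ) : Fin k) + 1) t ((k-1:ℕ) : Fin k), s) ^ (2:ℝ)
                ∂μ (((k-1:ℕ) : Fin k) + 1)) ^ (1/2 : ℝ))) ∂μ (((k-2:ℕ) : Fin k) + 1))
      = (∏ i ∈ Finset.range (k-2), N (i : Fin k)) *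
          ∫⁻ t, (∫⁻ a, G ((k-2:ℕ) : Fin k) (a, t) ^ (2:ℝ)
              ∂μ ((k-2:ℕ) : Fin k)) ^ (1/2 : ℝ) *
            (∫⁻ s, G ((k-1:ℕ) : Fin k)
                (_root_.cast (congrArg X hceq) t, s) ^ (2:ℝ)
                ∂μ (((k-1:ℕ) : Fin k) + 1)) ^ (1/2 : ℝ) ∂μ (((k-2:ℕ) : Fin k) + 1) := by
        simp only [hbody2]
        exact lintegral_const_mul _ (hWt.mul hPsiC)
    _ ≤ (∏ i ∈ Finset.range (k-2), N (i : Fin k)) *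
          ((∫⁻ t, ((∫⁻ a, G ((k-2:ℕ) : Fin k) (a, t) ^ (2:ℝ)
              ∂μ ((k-2:ℕ) : Fin k)) ^ (1/2 : ℝ)) ^ (2:ℝ) ∂μ (((k-2:ℕ) : Fin k) + 1)) ^ (1/2:ℝ) *
           (∫⁻ t, ((∫⁻ s, G ((k-1:ℕ) : Fin k)
              (_root_.cast (congrArg X hceq) t, s) ^ (2:ℝ)
              ∂μ (((k-1:ℕ) : Fin k) + 1)) ^ (1/2 : ℝ)) ^ (2:ℝ)
              ∂μ (((k-2:ℕ) : Fin k) + 1)) ^ (1/2:ℝ)) := mul_le_mul_right hCS _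
    _ = ∏ i, N i := by
        rw [hWsq, hVsq, hprodk, prod_range_split_top hk (fun i : ℕ => N (i : Fin k)),
          show ((∫⁻ q, G ((k-2:ℕ) : Fin k) q ^ (2:ℝ)
              ∂((μ ((k-2:ℕ) : Fin k)).prod (μ (((k-2:ℕ) : Fin k) + 1)))) ^ (1/2 : ℝ))
            = N ((k-2:ℕ) : Fin k) from rfl,
          show ((∫⁻ q, G ((k-1:ℕ) : Fin k) q ^ (2:ℝ)
              ∂((μ ((k-1:ℕ) : Fin k)).prod (μ (((k-1:ℕ) : Fin k) + 1)))) ^ (1/2 : ℝ))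
            = N ((k-1:ℕ) : Fin k) from rfl]
        ring


private lemma pi_map_pair {k : ℕ} (X : Fin k → Type*) [∀ i, MeasurableSpace (X i)]
    (μ : ∀ i, Measure (X i)) [∀ i, IsProbabilityMeasure (μ i)] {i j : Fin k} (hij : i ≠ j) :
    (Measure.pi μ).map (fun x => (x i, x j)) = (μ i).prod (μ j) := by
  classical
  refine (Measure.prod_eq (μ := μ i) (ν := μ j) fun s t hs ht => ?_).symm
  rw [Measure.map_apply ((measurable_pi_apply i).prodMk (measurable_pi_apply j)) (hs.prod ht)]
  have hpre : (fun x : ∀ l, X l => (x i, x j)) ⁻¹' (s ×ˢ t)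
      = Set.pi Set.univ
          (Function.update (Function.update (fun l => (Set.univ : Set (X l))) i s) j t) := by
    ext x
    simp only [Set.mem_preimage, Set.mem_prod, Set.mem_pi, Set.mem_univ, true_implies]
    constructor
    · rintro ⟨h1, h2⟩ l
      rcases eq_or_ne l j with rfl | hlj
      · rwa [Function.update_self]
      · rw [Function.update_of_ne hlj]
        rcases eq_or_ne l i with rfl | hli
        · rwa [Function.update_self]
        · rw [Function.update_of_ne hli]; trivial
    · intro h
      refine ⟨?_, ?_⟩
      · have := h i; rwa [Function.update_of_ne hij, Function.update_self] at this
      · have := h j; rwa [Function.update_self] at this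
  rw [hpre, Measure.pi_pi]
  have hfun : (fun l => μ l
      (Function.update (Function.update (fun l => (Set.univ : Set (X l))) i s) j t l))
      = Function.update (Function.update (fun l => μ l Set.univ) i (μ i s)) j (μ j t) := by
    funext l
    rcases eq_or_ne l j with rfl | hlj
    · simp
    · rw [Function.update_of_ne hlj, Function.update_of_ne hlj]
      rcases eq_or_ne l i with rfl | hli
      · simp
      · rw [Function.update_of_ne hli, Function.update_of_ne hli]
  rw [hfun, Finset.prod_update_of_mem (Finset.mem_univ j),
    Finset.prod_update_of_mem (by simp [Finset.mem_sdiff, hij] : i ∈ Finset.univ \ {j})]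
  simp [measure_univ, mul_comm]


private lemma sqrt_prod' {ι : Type*} (s : Finset ι) (f : ι → ℝ) (hf : ∀ i ∈ s, 0 ≤ f i) :
    Real.sqrt (∏ i ∈ s, f i) = ∏ i ∈ s, Real.sqrt (f i) := by
  induction s using Finset.cons_induction with
  | empty => simp
  | cons a s ha ih =>
    rw [Finset.prod_cons, Finset.prod_cons,
      Real.sqrt_mul (hf a (Finset.mem_cons_self a s)),
      ih fun i hi => hf i (Finset.mem_cons_of_mem hi)]

theorem cyclic_integral_cauchy_schwarz
    (k : ℕ) [NeZero k] (hk : 3 ≤ k)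
    (X : Fin k → Type*) [∀ i, MeasurableSpace (X i)]
    (μ : ∀ i, Measure (X i)) [∀ i, IsProbabilityMeasure (μ i)]
    (f : ∀ i : Fin k, X i × X (i + 1) → ℝ)
    (hf : ∀ i, MemLp (f i) 2 ((μ i).prod (μ (i + 1)))) :
    (∫ x : ∀ i, X i, ∏ i, f i (x i, x (i + 1)) ∂(Measure.pi μ)) ≤
      Real.sqrt (∏ i, ∫ q, f i q ^ 2 ∂((μ i).prod (μ (i + 1)))) := by
  classical
  have hsm : ∀ i, AEStronglyMeasurable (f i) ((μ i).prod (μ (i + 1))) := fun i => (hf i).1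
  set g : ∀ i : Fin k, X i × X (i + 1) → ℝ := fun i => (hsm i).mk (f i) with hgdef
  have hgm : ∀ i, Measurable (g i) := fun i => (hsm i).stronglyMeasurable_mk.measurable
  have hfg : ∀ i, f i =ᵐ[(μ i).prod (μ (i + 1))] g i := fun i => (hsm i).ae_eq_mk
  have hgL2 : ∀ i, MemLp (g i) 2 ((μ i).prod (μ (i + 1))) := fun i => (hf i).ae_eq (hfg i)
  set G : ∀ i : Fin k, X i × X (i + 1) → ℝ≥0∞ := fun i q => (‖g i q‖₊ : ℝ≥0∞) with hGdef
  have hGm : ∀ i, Measurable (G i) := fun i => (hgm i).nnnorm.coe_nnreal_ennreal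
  have h01 : ∀ i : Fin k, i ≠ i + 1 := by
    intro i h
    have h' : i + 0 = i + 1 := by rw [add_zero]; exact h
    have h0 : (0 : Fin k) = 1 := add_left_cancel h'
    have hv := congrArg Fin.val h0
    rw [show (1 : Fin k) = ((1:ℕ) : Fin k) from (Nat.cast_one).symm] at hv
    rw [Fin.val_zero, Fin.val_cast_of_lt (by omega)] at hv
    omega
  have hprojm : ∀ i : Fin k, Measurable fun x : ∀ l, X l => (x i, x (i + 1)) :=
    fun i => (measurable_pi_apply i).prodMk (measurable_pi_apply (i + 1))
  have hcompae : ∀ i : Fin k,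
      (fun x : ∀ l, X l => f i (x i, x (i+1))) =ᵐ[Measure.pi μ]
        (fun x => g i (x i, x (i+1))) := by
    intro i
    exact ae_eq_comp (hprojm i).aemeasurable
      (by rw [pi_map_pair X μ (h01 i)]; exact hfg i)
  have step1 : (∫ x : ∀ i, X i, ∏ i, f i (x i, x (i + 1)) ∂(Measure.pi μ))
      ≤ ∫ x : ∀ i, X i, ∏ i, |g i (x i, x (i + 1))| ∂(Measure.pi μ) := by
    refine (le_abs_self _).trans ?_
    rw [← Real.norm_eq_abs]
    refine (norm_integral_le_integral_norm _).trans (le_of_eq ?_)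
    refine integral_congr_ae ?_
    have hall : ∀ᵐ x ∂(Measure.pi μ), ∀ i : Fin k, f i (x i, x (i+1)) = g i (x i, x (i+1)) :=
      (ae_all_iff).2 hcompae
    filter_upwards [hall] with x hx
    rw [Real.norm_eq_abs, Finset.abs_prod]
    exact Finset.prod_congr rfl fun i _ => by rw [hx i]
  have hmeasg : Measurable fun x : ∀ l, X l => ∏ i, |g i (x i, x (i+1))| :=
    Finset.measurable_prod _ fun i _ => ((hgm i).comp (hprojm i)).abs
  have step2 : (∫ x : ∀ i, X i, ∏ i, |g i (x i, x (i + 1))| ∂(Measure.pi μ))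
      = (∫⁻ x : ∀ i, X i, ∏ i, G i (x i, x (i + 1)) ∂(Measure.pi μ)).toReal := by
    rw [integral_eq_lintegral_of_nonneg_ae
      (ae_of_all _ fun x => Finset.prod_nonneg fun i _ => abs_nonneg _)
      hmeasg.aestronglyMeasurable]
    congr 1
    refine lintegral_congr fun x => ?_
    rw [ENNReal.ofReal_prod_of_nonneg fun i _ => abs_nonneg _]
    exact Finset.prod_congr rfl fun i _ => (Real.enorm_eq_ofReal_abs _).symm
  have hIi : ∀ i : Fin k, ENNReal.ofReal (∫ q, f i q ^ 2 ∂((μ i).prod (μ (i + 1))))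
      = ∫⁻ q, G i q ^ (2:ℝ) ∂((μ i).prod (μ (i + 1))) := by
    intro i
    have hfg2 : (fun q => f i q ^ 2) =ᵐ[(μ i).prod (μ (i+1))] fun q => g i q ^ 2 := by
      filter_upwards [hfg i] with q hq; rw [hq]
    rw [integral_congr_ae hfg2,
      ofReal_integral_eq_lintegral_ofReal (hgL2 i).integrable_sq
        (ae_of_all _ fun q => sq_nonneg _)]
    refine lintegral_congr fun q => ?_
    rw [ENNReal.rpow_two, ← sq_abs, ENNReal.ofReal_pow (abs_nonneg _)]
    congr 1
    exact (Real.enorm_eq_ofReal_abs _).symm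
  have hfin : ∀ i : Fin k, (∫⁻ q, G i q ^ (2:ℝ) ∂((μ i).prod (μ (i + 1)))) ≠ ⊤ :=
    fun i => by rw [← hIi i]; exact ENNReal.ofReal_ne_top
  have hcore := cycle_lintegral_le k hk X μ G hGm
  have hRfin : (∏ i, (∫⁻ q, G i q ^ (2:ℝ) ∂((μ i).prod (μ (i + 1)))) ^ (1/2:ℝ)) ≠ ⊤ :=
    ENNReal.prod_ne_top fun i _ =>
      (ENNReal.rpow_lt_top_of_nonneg (by norm_num) (hfin i)).ne
  calc (∫ x : ∀ i, X i, ∏ i, f i (x i, x (i + 1)) ∂(Measure.pi μ))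
      ≤ (∫⁻ x : ∀ i, X i, ∏ i, G i (x i, x (i + 1)) ∂(Measure.pi μ)).toReal :=
        step1.trans (le_of_eq step2)
    _ ≤ (∏ i, (∫⁻ q, G i q ^ (2:ℝ) ∂((μ i).prod (μ (i + 1)))) ^ (1/2:ℝ)).toReal :=
        ENNReal.toReal_mono hRfin hcore
    _ = ∏ i, ((∫⁻ q, G i q ^ (2:ℝ) ∂((μ i).prod (μ (i + 1)))) ^ (1/2:ℝ)).toReal :=
        ENNReal.toReal_prod _ _
    _ = ∏ i, Real.sqrt (∫ q, f i q ^ 2 ∂((μ i).prod (μ (i + 1)))) := by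
        refine Finset.prod_congr rfl fun i _ => ?_
        rw [← ENNReal.toReal_rpow, ← hIi i,
          ENNReal.toReal_ofReal (integral_nonneg fun q => sq_nonneg _),
          Real.sqrt_eq_rpow]
    _ = Real.sqrt (∏ i, ∫ q, f i q ^ 2 ∂((μ i).prod (μ (i + 1)))) :=
        (sqrt_prod' _ _ fun i _ => integral_nonneg fun q => sq_nonneg _).symm
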